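/- On a W₃-manifold, the square norm of ∇J satisfies ‖∇J‖² = -2 g^{ij} g^{kl} g((∇_{e_i} J)e_k, (∇_{e_l} J)e_j). -/

import Mathlib

open Finset

private lemma sum_swap4 {m : ℕ} (f : Fin m → Fin m → Fin m → Fin m → ℝ) :
    ∑ a, ∑ b, ∑ c, ∑ d, f a b c d = ∑ c, ∑ d, ∑ a, ∑ b, f a b c d := by
  calc ∑ a, ∑ b, ∑ c, ∑ d, f a b c d
      = ∑ a, ∑ c, ∑ b, ∑ d, f a b c d :=
        Finset.sum_congr rfl fun a _ => Finset.sum_comm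
    _ = ∑ c, ∑ a, ∑ b, ∑ d, f a b c d := Finset.sum_comm
    _ = ∑ c, ∑ a, ∑ d, ∑ b, f a b c d :=
        Finset.sum_congr rfl fun c _ => Finset.sum_congr rfl fun a _ => Finset.sum_comm
    _ = ∑ c, ∑ d, ∑ a, ∑ b, f a b c d :=
        Finset.sum_congr rfl fun c _ => Finset.sum_comm

/-- The purely combinatorial core of the trace identity, stated for the components
`F i k s = g((∇_{e_i}J)e_k, e_s)` and `A = ginv`. -/
private lemma core6 {m : ℕ} (A : Fin m → Fin m → ℝ) (F : Fin m → Fin m → Fin m → ℝ)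
    (Fs : ∀ i k s, F i k s = F i s k)
    (W : ∀ i k s, F i k s + F k s i + F s i k = 0) :
    ∑ i, ∑ j, ∑ k, ∑ l, ∑ s, ∑ t, A i j * A k l * (A s t * F i k s * F j l t)
      = -2 * ∑ i, ∑ j, ∑ k, ∑ l, ∑ s, ∑ t,
          A i j * A k l * (A s t * F i k s * F l j t) := by
  have congr6 : ∀ (f h : Fin m → Fin m → Fin m → Fin m → Fin m → Fin m → ℝ),
      (∀ i j k l s t, f i j k l s t = h i j k l s t) →
      (∑ i, ∑ j, ∑ k, ∑ l, ∑ s, ∑ t, f i j k l s t)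
        = ∑ i, ∑ j, ∑ k, ∑ l, ∑ s, ∑ t, h i j k l s t := by
    intro f h hfh
    exact Finset.sum_congr rfl fun i _ => Finset.sum_congr rfl fun j _ =>
      Finset.sum_congr rfl fun k _ => Finset.sum_congr rfl fun l _ =>
      Finset.sum_congr rfl fun s _ => Finset.sum_congr rfl fun t _ => hfh i j k l s t
  set T := ∑ i, ∑ j, ∑ k, ∑ l, ∑ s, ∑ t,
      A i j * A k l * (A s t * F i k s * F l j t) with hT
  have step1 : ∑ i, ∑ j, ∑ k, ∑ l, ∑ s, ∑ t, A i j * A k l * (A s t * F i k s * F j l t)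
      = ∑ i, ∑ j, ∑ k, ∑ l, ∑ s, ∑ t,
          (-(A i j * A k l * (A s t * F i k s * F l t j))
            + -(A i j * A k l * (A s t * F i k s * F t j l))) := by
    refine congr6 _ _ fun i j k l s t => ?_
    have hw : F j l t = -F l t j - F t j l := by have := W j l t; linarith
    rw [hw]; ring
  rw [step1]
  simp only [Finset.sum_add_distrib, Finset.sum_neg_distrib]
  have E1 : ∑ i, ∑ j, ∑ k, ∑ l, ∑ s, ∑ t, A i j * A k l * (A s t * F i k s * F l t j) = T := by
    refine congr6 _ _ fun i j k l s t => ?_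
    rw [Fs l t j]
  have E2 : ∑ i, ∑ j, ∑ k, ∑ l, ∑ s, ∑ t, A i j * A k l * (A s t * F i k s * F t j l) = T := by
    have swap : ∀ i j : Fin m,
        (∑ k, ∑ l, ∑ s, ∑ t, A i j * A k l * (A s t * F i k s * F t j l))
          = ∑ k, ∑ l, ∑ s, ∑ t, A i j * A s t * (A k l * F i s k * F l j t) :=
      fun i j => sum_swap4 (fun k l s t => A i j * A k l * (A s t * F i k s * F t j l))
    calc ∑ i, ∑ j, ∑ k, ∑ l, ∑ s, ∑ t, A i j * A k l * (A s t * F i k s * F t j l)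
        = ∑ i, ∑ j, ∑ k, ∑ l, ∑ s, ∑ t, A i j * A s t * (A k l * F i s k * F l j t) :=
          Finset.sum_congr rfl fun i _ => Finset.sum_congr rfl fun j _ => swap i j
      _ = T := by
          refine congr6 _ _ fun i j k l s t => ?_
          rw [Fs i s k]; ring
  rw [E1, E2]; ring

/-- Duality: the inverse metric reproduces `g` from its components. -/
private lemma key_dual {V : Type*} [AddCommGroup V] [Module ℝ V]
    (g : V →ₗ[ℝ] V →ₗ[ℝ] ℝ)
    {m : ℕ} (b : Module.Basis (Fin m) ℝ V) (ginv : Fin m → Fin m → ℝ)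
    (hginv : ∀ i j, (∑ k, ginv i k * g (b k) (b j)) = if i = j then (1:ℝ) else 0) :
    ∀ u v, g u v = ∑ s, ∑ t, ginv s t * g u (b s) * g (b t) v := by
  have keyb : ∀ p q, g (b p) (b q) = ∑ s, ∑ t, ginv s t * g (b p) (b s) * g (b t) (b q) := by
    intro p q
    have h1 : ∀ s : Fin m, (∑ t, ginv s t * g (b p) (b s) * g (b t) (b q))
        = g (b p) (b s) * (if s = q then (1:ℝ) else 0) := by
      intro s
      rw [← hginv s q, Finset.mul_sum]
      exact Finset.sum_congr rfl fun t _ => by ring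
    rw [Finset.sum_congr rfl fun s _ => h1 s]
    simp [mul_ite]
  intro u v
  have hu := b.sum_repr u
  have hv := b.sum_repr v
  have expandL : ∀ w : V, g u w = ∑ p, b.repr u p * g (b p) w := by
    intro w
    conv_lhs => rw [← hu]
    simp [-Module.Basis.sum_repr]
  have expandR : ∀ w : V, g w v = ∑ q, b.repr v q * g w (b q) := by
    intro w
    conv_lhs => rw [← hv]
    simp [-Module.Basis.sum_repr]
  calc g u v = ∑ p, b.repr u p * g (b p) v := expandL v
    _ = ∑ p, ∑ q, b.repr u p * (b.repr v q * g (b p) (b q)) := by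
        refine Finset.sum_congr rfl fun p _ => ?_
        rw [expandR (b p), Finset.mul_sum]
    _ = ∑ p, ∑ q, ∑ s, ∑ t, b.repr u p * b.repr v q *
          (ginv s t * g (b p) (b s) * g (b t) (b q)) := by
        refine Finset.sum_congr rfl fun p _ => Finset.sum_congr rfl fun q _ => ?_
        rw [show b.repr u p * (b.repr v q * g (b p) (b q))
            = b.repr u p * b.repr v q * g (b p) (b q) by ring, keyb p q]
        simp only [Finset.mul_sum]
    _ = ∑ s, ∑ t, ∑ p, ∑ q, b.repr u p * b.repr v q *
          (ginv s t * g (b p) (b s) * g (b t) (b q)) :=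
        sum_swap4 _
    _ = ∑ s, ∑ t, ginv s t * g u (b s) * g (b t) v := by
        refine Finset.sum_congr rfl fun s _ => Finset.sum_congr rfl fun t _ => ?_
        rw [expandL (b s), expandR (b t), mul_assoc, Finset.sum_mul_sum, Finset.mul_sum]
        refine Finset.sum_congr rfl fun p _ => ?_
        rw [Finset.mul_sum]
        refine Finset.sum_congr rfl fun q _ => ?_
        ring

/-- On a W₃-manifold, the square norm of `∇J` satisfies
`‖∇J‖² = -2 gⁱʲ gᵏˡ g((∇_{eᵢ}J)eₖ, (∇_{eₗ}J)eⱼ)`. Here `B x y` stands for `(∇_x J)y`,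
modelled on the tangent space with a basis `b` and inverse metric components `ginv`. -/
theorem norm_nablaJ_trace_identity
    {V : Type*} [AddCommGroup V] [Module ℝ V]
    (g : V →ₗ[ℝ] V →ₗ[ℝ] ℝ) (J : V →ₗ[ℝ] V) (B : V →ₗ[ℝ] V →ₗ[ℝ] V)
    {m : ℕ} (b : Module.Basis (Fin m) ℝ V) (ginv : Fin m → Fin m → ℝ)
    (hginv : ∀ i j, (∑ k, ginv i k * g (b k) (b j)) = if i = j then (1:ℝ) else 0)
    (g_symm : ∀ x y, g x y = g y x)
    (J_sq : ∀ x, J (J x) = -x)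
    (norden : ∀ x y, g (J x) (J y) = -(g x y))
    (F_symm : ∀ x y z, g (B x y) z = g (B x z) y)
    (F_hybrid : ∀ x y z, g (B x y) z = g (B x (J y)) (J z))
    (W3 : ∀ x y z, g (B x y) z + g (B y z) x + g (B z x) y = 0) :
    (∑ i, ∑ j, ∑ k, ∑ l, ginv i j * ginv k l * g (B (b i) (b k)) (B (b j) (b l))) =
      -2 * ∑ i, ∑ j, ∑ k, ∑ l, ginv i j * ginv k l * g (B (b i) (b k)) (B (b l) (b j)) := by
  have key := key_dual g b ginv hginv
  set F : Fin m → Fin m → Fin m → ℝ := fun i k s => g (B (b i) (b k)) (b s) with hF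
  have lhs_eq : (∑ i, ∑ j, ∑ k, ∑ l, ginv i j * ginv k l * g (B (b i) (b k)) (B (b j) (b l)))
      = ∑ i, ∑ j, ∑ k, ∑ l, ∑ s, ∑ t,
          ginv i j * ginv k l * (ginv s t * F i k s * F j l t) := by
    refine Finset.sum_congr rfl fun i _ => Finset.sum_congr rfl fun j _ =>
      Finset.sum_congr rfl fun k _ => Finset.sum_congr rfl fun l _ => ?_
    rw [key (B (b i) (b k)) (B (b j) (b l))]
    simp only [Finset.mul_sum]
    refine Finset.sum_congr rfl fun s _ => Finset.sum_congr rfl fun t _ => ?_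
    rw [g_symm (b t) (B (b j) (b l))]
  have rhs_eq : (∑ i, ∑ j, ∑ k, ∑ l, ginv i j * ginv k l * g (B (b i) (b k)) (B (b l) (b j)))
      = ∑ i, ∑ j, ∑ k, ∑ l, ∑ s, ∑ t,
          ginv i j * ginv k l * (ginv s t * F i k s * F l j t) := by
    refine Finset.sum_congr rfl fun i _ => Finset.sum_congr rfl fun j _ =>
      Finset.sum_congr rfl fun k _ => Finset.sum_congr rfl fun l _ => ?_
    rw [key (B (b i) (b k)) (B (b l) (b j))]
    simp only [Finset.mul_sum]
    refine Finset.sum_congr rfl fun s _ => Finset.sum_congr rfl fun t _ => ?_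
    rw [g_symm (b t) (B (b l) (b j))]
  rw [lhs_eq, rhs_eq]
  exact core6 ginv F (fun i k s => F_symm (b i) (b k) (b s))
    (fun i k s => W3 (b i) (b k) (b s))
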